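/- arXiv:1602.02536 — 3 statements merged into one kernel-verified Lean document; each statement's English description precedes it below -/
import Mathlib

section
/- The minimum number of shifts needed to transform A into its Ferrers matrix F equals Σ_{j=1}^n (F_j − A_j), where (F_j − A_j) = Σ_{i=1}^m (F_{i,j} − A_{i,j})^+. In particular, since each shift changes exactly one entry from 0 to 1 in one column and from 1 to 0 in a strictly later column of the same row, disc(A) = Σ_{j=1}^n Σ_{i=1}^m max(F_{i,j} − A_{i,j}, 0). -/
open Finset

def rowSum {m n : ℕ} (A : Fin m → Fin n → ℕ) (i : Fin m) : ℕ := ∑ j, A i j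

def colSum {m n : ℕ} (A : Fin m → Fin n → ℕ) (j : Fin n) : ℕ := ∑ i, A i j

/-- The Ferrers matrix of `A`: row `i` starts with `rowSum A i` ones followed by zeros. -/
def Ferrers {m n : ℕ} (A : Fin m → Fin n → ℕ) : Fin m → Fin n → ℕ :=
  fun i j => if (j : ℕ) < rowSum A i then 1 else 0

/-- `A` is a 0,1-matrix. -/
def ZeroOne {m n : ℕ} (A : Fin m → Fin n → ℕ) : Prop := ∀ i j, A i j = 0 ∨ A i j = 1

/-- Non-increasing row sums. -/
def RowsMono {m n : ℕ} (A : Fin m → Fin n → ℕ) : Prop :=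
  ∀ i i' : Fin m, i ≤ i' → rowSum A i' ≤ rowSum A i

/-- Non-increasing column sums. -/
def ColsMono {m n : ℕ} (A : Fin m → Fin n → ℕ) : Prop :=
  ∀ j j' : Fin n, j ≤ j' → colSum A j' ≤ colSum A j

/-- The discrepancy of Brualdi and Sanderson, via the column-difference formula:
`disc A = Σ_j Σ_i (F_{i,j} − A_{i,j})^+` (truncated subtraction on ℕ). -/
def disc {m n : ℕ} (A : Fin m → Fin n → ℕ) : ℕ :=
  ∑ j, ∑ i, (Ferrers A i j - A i j)

/-- The matrix `A` with columns permuted by `σ`. -/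
def colApply {m n : ℕ} (A : Fin m → Fin n → ℕ) (σ : Equiv.Perm (Fin n)) :
    Fin m → Fin n → ℕ := fun i j => A i (σ j)

/-- `σ` permutes only columns of equal column sum. -/
def ColPerm {m n : ℕ} (A : Fin m → Fin n → ℕ) (σ : Equiv.Perm (Fin n)) : Prop :=
  ∀ j, colSum A (σ j) = colSum A j

/-- `σ` permutes only columns whose column sum is `x`, fixing all others. -/
def BlockPerm {m n : ℕ} (A : Fin m → Fin n → ℕ) (x : ℕ) (σ : Equiv.Perm (Fin n)) : Prop :=
  ColPerm A σ ∧ ∀ j, colSum A j ≠ x → σ j = j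

/-- The isomorphic discrepancy: minimum discrepancy over column-sum-preserving permutations. -/
noncomputable def isoDisc {m n : ℕ} (A : Fin m → Fin n → ℕ) : ℕ :=
  sInf {d | ∃ σ : Equiv.Perm (Fin n), ColPerm A σ ∧ disc (colApply A σ) = d}

/-- A single shift: in some row i, a 1 in column j' is moved to an earlier column j. -/
def IsShift {m n : ℕ} (A B : Fin m → Fin n → ℕ) : Prop :=
  ∃ (i : Fin m) (j j' : Fin n), j < j' ∧ A i j = 0 ∧ A i j' = 1 ∧
    B = fun i' j'' =>
      if i' = i then (if j'' = j then 1 else if j'' = j' then 0 else A i j'') else A i' j''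

/-- ShiftChain k A B : B can be obtained from A by exactly k shifts. -/
def ShiftChain {m n : ℕ} : ℕ → (Fin m → Fin n → ℕ) → (Fin m → Fin n → ℕ) → Prop
  | 0, A, B => A = B
  | k + 1, A, B => ∃ C, IsShift A C ∧ ShiftChain k C B

/-- Auxiliary: swapping two entries of a sum. -/
lemma pair_sum_aux {n : ℕ} {j j' : Fin n} (h : j ≠ j') (f g : Fin n → ℕ)
    (hfg : ∀ x, x ≠ j → x ≠ j' → f x = g x) :
    ∑ x, f x + (g j + g j') = ∑ x, g x + (f j + f j') := by
  have hsub : ({j, j'} : Finset (Fin n)) ⊆ univ := subset_univ _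
  have h1 := Finset.sum_sdiff (f := f) hsub
  have h2 := Finset.sum_sdiff (f := g) hsub
  rw [Finset.sum_pair h] at h1 h2
  have h3 : ∑ x ∈ univ \ {j, j'}, f x = ∑ x ∈ univ \ {j, j'}, g x :=
    Finset.sum_congr rfl (by
      intro x hx
      simp only [mem_sdiff, mem_univ, mem_insert, mem_singleton, true_and] at hx
      push_neg at hx
      exact hfg x hx.1 hx.2)
  omega

lemma single_sum_aux {m : ℕ} {i : Fin m} (f g : Fin m → ℕ)
    (hfg : ∀ x, x ≠ i → f x = g x) :
    ∑ x, f x + g i = ∑ x, g x + f i := by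
  have h1 := Finset.sum_sdiff (f := f) (subset_univ {i})
  have h2 := Finset.sum_sdiff (f := g) (subset_univ {i})
  rw [Finset.sum_singleton] at h1 h2
  have h3 : ∑ x ∈ univ \ {i}, f x = ∑ x ∈ univ \ {i}, g x :=
    Finset.sum_congr rfl (by
      intro x hx
      simp only [mem_sdiff, mem_univ, mem_singleton, true_and] at hx
      exact hfg x hx)
  omega

lemma sum_ferrers_row {m n : ℕ} (A : Fin m → Fin n → ℕ) (h01 : ZeroOne A) (i : Fin m) :
    ∑ j, Ferrers A i j = rowSum A i := by
  have hr : rowSum A i ≤ n := by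
    have : rowSum A i ≤ ∑ _j : Fin n, 1 :=
      Finset.sum_le_sum (fun j _ => by rcases h01 i j with h | h <;> omega)
    simpa using this
  unfold Ferrers
  rw [Fin.sum_univ_eq_sum_range (fun t => if t < rowSum A i then 1 else 0)]
  have he : ∀ t, (if t < rowSum A i then (1:ℕ) else 0)
      = if t ∈ Finset.range (rowSum A i) then 1 else 0 := by
    intro t; simp [Finset.mem_range]
  simp_rw [he]
  rw [Finset.sum_ite_mem]
  have hi : Finset.range n ∩ Finset.range (rowSum A i) = Finset.range (rowSum A i) := by
    ext t; simp only [Finset.mem_inter, Finset.mem_range]; omega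
  rw [hi]
  simp

/-- A single shift decreases the potential by at most 1. -/
lemma phi_shift_le {m n : ℕ} (F : Fin m → Fin n → ℕ) {X Y : Fin m → Fin n → ℕ}
    (hs : IsShift X Y) :
    ∑ i, ∑ j, (F i j - X i j) ≤ (∑ i, ∑ j, (F i j - Y i j)) + 1 := by
  obtain ⟨i, j, j', hlt, h0, h1, hB⟩ := hs
  subst hB
  have hne : j ≠ j' := ne_of_lt hlt
  set Yi : Fin n → ℕ := fun x => if x = j then 1 else if x = j' then 0 else X i x with hYi
  have hrow := pair_sum_aux hne (fun x => F i x - X i x) (fun x => F i x - Yi x)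
    (by intro x hxj hxj'; simp [hYi, hxj, hxj'])
  have hgj : Yi j = 1 := by simp [hYi]
  have hgj' : Yi j' = 0 := by simp [hYi, hne.symm]
  simp only [hgj, hgj', h0, h1] at hrow
  have hrowle : ∑ x, (F i x - X i x) ≤ ∑ x, (F i x - Yi x) + 1 := by omega
  have hall := single_sum_aux (i := i) (fun i' => ∑ x, (F i' x - X i' x))
    (fun i' => ∑ x, (F i' x -
      (if i' = i then (if x = j then 1 else if x = j' then 0 else X i x) else X i' x)))
    (by intro i' hi'; simp [hi'])
  simp only [eq_self_iff_true, if_true] at hall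
  have hYieq : ∑ x, (F i x - Yi x)
      = ∑ x, (F i x - (if x = j then 1 else if x = j' then 0 else X i x)) := rfl
  beta_reduce
  omega

lemma chain_phi_le {m n : ℕ} (F : Fin m → Fin n → ℕ) :
    ∀ (k : ℕ) (X B : Fin m → Fin n → ℕ), ShiftChain k X B →
      ∑ i, ∑ j, (F i j - X i j) ≤ (∑ i, ∑ j, (F i j - B i j)) + k := by
  intro k
  induction k with
  | zero => intro X B h; cases h; simp
  | succ k ih =>
      intro X B h
      obtain ⟨C, hs, hc⟩ := h
      have h1 := phi_shift_le F hs
      have h2 := ih C B hc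
      omega

lemma chain_exists {m n : ℕ} :
    ∀ (d : ℕ) (X : Fin m → Fin n → ℕ), ZeroOne X →
      (∑ i, ∑ j, (Ferrers X i j - X i j)) = d → ShiftChain d X (Ferrers X) := by
  intro d
  induction d with
  | zero =>
      intro X h01 hphi
      show X = Ferrers X
      have hz : ∀ i : Fin m, ∀ x : Fin n, Ferrers X i x - X i x = 0 := by
        intro i x
        have h1 := (Finset.sum_eq_zero_iff.mp hphi) i (mem_univ i)
        exact (Finset.sum_eq_zero_iff.mp h1) x (mem_univ x)
      funext i x
      have hrow := sum_ferrers_row X h01 i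
      have hle : ∀ x : Fin n, x ∈ univ → Ferrers X i x ≤ X i x := by
        intro x _; have := hz i x; omega
      have heq : ∑ x, Ferrers X i x = ∑ x, X i x := hrow
      exact ((Finset.sum_eq_sum_iff_of_le hle).mp heq x (mem_univ x)).symm
  | succ d ih =>
      intro X h01 hphi
      have hpos : ∃ i j, 0 < Ferrers X i j - X i j := by
        by_contra hcon
        push_neg at hcon
        have : ∑ i, ∑ j, (Ferrers X i j - X i j) = 0 :=
          Finset.sum_eq_zero (fun i _ => Finset.sum_eq_zero (fun x _ => by have := hcon i x; omega))
        omega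
      obtain ⟨i, j, hij⟩ := hpos
      have hX0 : X i j = 0 := by
        unfold Ferrers at hij; split at hij <;> omega
      have hFj : Ferrers X i j = 1 := by
        unfold Ferrers at hij ⊢; split at hij <;> simp_all
      have hrowF := sum_ferrers_row X h01 i
      have hj' : ∃ j', Ferrers X i j' < X i j' := by
        by_contra hcon
        push_neg at hcon
        have hlt : ∑ x, X i x < ∑ x, Ferrers X i x :=
          Finset.sum_lt_sum (fun x _ => hcon x) ⟨j, mem_univ j, by omega⟩
        rw [hrowF] at hlt
        unfold rowSum at hlt
        omega
      obtain ⟨j', hj'⟩ := hj'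
      have hX1 : X i j' = 1 := by rcases h01 i j' with h | h <;> omega
      have hF0 : Ferrers X i j' = 0 := by omega
      have hlt : j < j' := by
        unfold Ferrers at hFj hF0
        rw [Fin.lt_def]
        by_contra hcon
        push_neg at hcon
        split at hFj
        · split at hF0
          · omega
          · omega
        · omega
      have hne : j ≠ j' := ne_of_lt hlt
      refine ⟨fun i' x => if i' = i then (if x = j then 1 else if x = j' then 0 else X i x)
        else X i' x, ⟨i, j, j', hlt, hX0, hX1, rfl⟩, ?_⟩
      set Y : Fin m → Fin n → ℕ := fun i' x =>
        if i' = i then (if x = j then 1 else if x = j' then 0 else X i x) else X i' x with hY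
      have hY01 : ZeroOne Y := by
        intro i' x
        simp only [hY]
        split
        · split
          · right; rfl
          · split
            · left; rfl
            · exact h01 i x
        · exact h01 i' x
      have hYij : Y i j = 1 := by simp [hY]
      have hYij' : Y i j' = 0 := by simp [hY, hne.symm]
      have hrowsum : ∀ i', rowSum Y i' = rowSum X i' := by
        intro i'
        by_cases hi' : i' = i
        · subst hi'
          have := pair_sum_aux hne (fun x => Y i' x) (fun x => X i' x)
            (by intro x hxj hxj'; simp [hY, hxj, hxj'])
          simp only [hYij, hYij', hX0, hX1] at this
          unfold rowSum
          omega
        · unfold rowSum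
          exact Finset.sum_congr rfl (fun x _ => by simp [hY, hi'])
      have hFerrY : Ferrers Y = Ferrers X := by
        funext i' x
        unfold Ferrers
        rw [hrowsum]
      -- potential drops by exactly one
      have hrow := pair_sum_aux hne (fun x => Ferrers X i x - X i x)
        (fun x => Ferrers X i x - Y i x)
        (by intro x hxj hxj'; simp [hY, hxj, hxj'])
      simp only [hYij, hYij', hX0, hX1, hFj, hF0] at hrow
      have hall := single_sum_aux (i := i) (fun i' => ∑ x, (Ferrers X i' x - X i' x))
        (fun i' => ∑ x, (Ferrers X i' x - Y i' x))
        (by intro i' hi'; exact Finset.sum_congr rfl (fun x _ => by simp [hY, hi']))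
      have hphiY : ∑ i', ∑ x, (Ferrers Y i' x - Y i' x) = d := by
        rw [hFerrY]
        beta_reduce at hall hrow
        omega
      have := ih Y hY01 hphiY
      rwa [hFerrY] at this

/-- the minimum number of shifts to transform A into its Ferrers matrix is
Σ_j Σ_i (F_{i,j} − A_{i,j})^+, i.e. disc A. -/
theorem disc_eq_min_shifts {m n : ℕ} (A : Fin m → Fin n → ℕ)
    (h01 : ZeroOne A) (hr : RowsMono A) (hc : ColsMono A) :
    IsLeast {k : ℕ | ShiftChain k A (Ferrers A)} (disc A) := by
  have hcomm : disc A = ∑ i, ∑ j, (Ferrers A i j - A i j) := Finset.sum_comm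
  constructor
  · show ShiftChain (disc A) A (Ferrers A)
    rw [hcomm]
    exact chain_exists _ A h01 rfl
  · intro k hk
    have h1 := chain_phi_le (Ferrers A) k A (Ferrers A) hk
    simp only [Nat.sub_self, Finset.sum_const_zero, zero_add] at h1
    omega
end

section
/- disc(A) ≥ Σ_{j=1}^n (c'_j − c_j)^+, where c_j are the column sums of A and c'_j the column sums of its Ferrers matrix F. -/
open Finset

/-- disc(A) ≥ Σ_j (c'_j − c_j)^+. -/
theorem disc_ge_colSum_diff {m n : ℕ} (A : Fin m → Fin n → ℕ)
    (h01 : ZeroOne A) (hr : RowsMono A) :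
    disc A ≥ ∑ j, (colSum (Ferrers A) j - colSum A j) := by
  apply Finset.sum_le_sum
  intro j _
  unfold colSum
  rw [tsub_le_iff_right, ← Finset.sum_add_distrib]
  exact Finset.sum_le_sum fun i _ => le_tsub_add
end

section
/- Id(A) equals the sum over the blocks i = 1,...,k of the minimum weights of perfect matchings in the bipartite graphs G_i, i.e. Id(A) = Σ_{i=1}^k w(M_i) where M_i is a minimum weighted perfect matching in G_i. -/
open Finset

section Aux

variable {n : ℕ}

/-- Glue a family of fiber permutations into a global permutation. -/
noncomputable def glue (f : Fin n → ℕ) (e : ∀ x : ℕ, {j : Fin n // f j = x} ≃ {j : Fin n // f j = x}) :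
    Equiv.Perm (Fin n) :=
  (Equiv.sigmaFiberEquiv f).symm.trans ((Equiv.sigmaCongrRight e).trans (Equiv.sigmaFiberEquiv f))

lemma glue_apply (f : Fin n → ℕ) (e : ∀ x : ℕ, {j : Fin n // f j = x} ≃ {j : Fin n // f j = x})
    (j : Fin n) : glue f e j = ((e (f j)) ⟨j, rfl⟩ : {j' : Fin n // f j' = f j}) := rfl

lemma f_glue (f : Fin n → ℕ) (e : ∀ x : ℕ, {j : Fin n // f j = x} ≃ {j : Fin n // f j = x})
    (j : Fin n) : f (glue f e j) = f j := ((e (f j)) ⟨j, rfl⟩).2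

/-- Restrict a fiber-preserving permutation to a fiber. -/
def restr (f : Fin n → ℕ) (σ : Equiv.Perm (Fin n)) (h : ∀ j, f (σ j) = f j) (x : ℕ) :
    {j : Fin n // f j = x} ≃ {j : Fin n // f j = x} where
  toFun j := ⟨σ j, by rw [h]; exact j.2⟩
  invFun j := ⟨σ.symm j, by
    have := h (σ.symm j)
    rw [Equiv.apply_symm_apply] at this
    rw [← this]; exact j.2⟩
  left_inv j := by simp
  right_inv j := by simp

lemma sum_fiber_subtype (f : Fin n → ℕ) (g : Fin n → ℕ) :
    ∑ j, g j = ∑ x ∈ Finset.image f Finset.univ, ∑ j : {j : Fin n // f j = x}, g j := by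
  rw [← Finset.sum_fiberwise_of_maps_to (fun i _ => Finset.mem_image_of_mem f (mem_univ i)) g]
  refine Finset.sum_congr rfl fun x _ => ?_
  rw [← Finset.sum_subtype (Finset.filter (fun j => f j = x) Finset.univ)
    (fun j => by simp) g]

end Aux

lemma ferrers_colApply {m n : ℕ} (A : Fin m → Fin n → ℕ) (σ : Equiv.Perm (Fin n)) :
    Ferrers (colApply A σ) = Ferrers A := by
  funext i j
  have : rowSum (colApply A σ) i = rowSum A i := Equiv.sum_comp σ (A i)
  simp [Ferrers, this]

lemma disc_colApply {m n : ℕ} (A : Fin m → Fin n → ℕ) (σ : Equiv.Perm (Fin n)) :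
    disc (colApply A σ) = ∑ j, ∑ i, (Ferrers A i j - A i (σ j)) := by
  unfold disc
  rw [ferrers_colApply]
  rfl

/-- Id(A) equals the sum over blocks of the minimum weights of perfect
matchings between the block's Ferrers columns and the block's A-columns. -/
theorem isoDisc_eq_sum_matchings {m n : ℕ} (A : Fin m → Fin n → ℕ)
    (h01 : ZeroOne A) (hr : RowsMono A) (hc : ColsMono A) :
    isoDisc A =
      ∑ x ∈ Finset.image (colSum A) Finset.univ,
        sInf {d | ∃ e : {j : Fin n // colSum A j = x} ≃ {j : Fin n // colSum A j = x},
          (∑ j : {j : Fin n // colSum A j = x},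
            ∑ i, (Ferrers A i (j : Fin n) - A i ((e j : {j : Fin n // colSum A j = x}) : Fin n))) = d} := by
  classical
  set f := colSum A with hf
  set w : Fin n → Fin n → ℕ := fun j j' => ∑ i, (Ferrers A i j - A i j') with hw
  -- T x : the set on the RHS
  set T : ℕ → Set ℕ := fun x =>
    {d | ∃ e : {j : Fin n // f j = x} ≃ {j : Fin n // f j = x},
      (∑ j : {j : Fin n // f j = x}, w (j : Fin n) ((e j : {j : Fin n // f j = x}) : Fin n)) = d}
    with hT
  have hTne : ∀ x, (T x).Nonempty := fun x => ⟨_, Equiv.refl _, rfl⟩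
  set S : Set ℕ := {d | ∃ σ : Equiv.Perm (Fin n), ColPerm A σ ∧ disc (colApply A σ) = d} with hS
  have hSne : S.Nonempty := ⟨_, Equiv.refl _, fun j => rfl, rfl⟩
  have goal_eq : (∑ x ∈ Finset.image (colSum A) Finset.univ,
        sInf {d | ∃ e : {j : Fin n // colSum A j = x} ≃ {j : Fin n // colSum A j = x},
          (∑ j : {j : Fin n // colSum A j = x},
            ∑ i, (Ferrers A i (j : Fin n) - A i ((e j : {j : Fin n // colSum A j = x}) : Fin n))) = d})
      = ∑ x ∈ Finset.image f Finset.univ, sInf (T x) := rfl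
  rw [goal_eq]
  have colperm_iff : ∀ σ : Equiv.Perm (Fin n), ColPerm A σ ↔ ∀ j, f (σ j) = f j := by
    intro σ; rfl
  apply le_antisymm
  · -- choose optimal e for each fiber, glue
    have hmem : ∀ x, sInf (T x) ∈ T x := fun x => Nat.sInf_mem (hTne x)
    choose e he using hmem
    have hcp : ColPerm A (glue f e) := fun j => f_glue f e j
    refine Nat.sInf_le ⟨glue f e, hcp, ?_⟩
    rw [disc_colApply]
    have : ∑ j, w j (glue f e j) = ∑ x ∈ Finset.image f Finset.univ, sInf (T x) := by
      rw [sum_fiber_subtype f (fun j => w j (glue f e j))]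
      refine Finset.sum_congr rfl fun x hx => ?_
      rw [← he x]
      refine Finset.sum_congr rfl fun j _ => ?_
      obtain ⟨j, hj⟩ := j
      subst hj
      rfl
    exact this
  · obtain ⟨σ, hσ, hd⟩ := Nat.sInf_mem hSne
    have hfp : ∀ j, f (σ j) = f j := hσ
    calc ∑ x ∈ Finset.image f Finset.univ, sInf (T x)
        ≤ ∑ x ∈ Finset.image f Finset.univ,
            ∑ j : {j : Fin n // f j = x}, w (j : Fin n) (σ (j : Fin n)) := by
          refine Finset.sum_le_sum fun x _ => ?_
          exact Nat.sInf_le ⟨restr f σ hfp x, Finset.sum_congr rfl fun j _ => rfl⟩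
      _ = ∑ j, w j (σ j) := (sum_fiber_subtype f (fun j => w j (σ j))).symm
      _ = disc (colApply A σ) := (disc_colApply A σ).symm
      _ = isoDisc A := hd
end
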